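/- Let (X, τ) be a T₀-Alexandroff space. Define d(x, y) = 0 if x ∈ cl_τ({y}) and d(x, y) = 1 otherwise. Then d is an equidistant quasi-metric on X and the open-ball topology O^d equals τ. -/
import Mathlib


open Topology

def IsAlexandroff {X : Type*} (τ : TopologicalSpace X) : Prop :=
  ∀ S : Set (Set X), (∀ s ∈ S, IsOpen[τ] s) → IsOpen[τ] (⋂₀ S)

def IsQuasiMetric {X : Type*} (d : X → X → ℝ) : Prop :=
  (∀ x y, 0 ≤ d x y) ∧ (∀ x, d x x = 0) ∧
  (∀ x y z, d x y ≤ d x z + d z y) ∧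
  (∀ x y, d x y = 0 → d y x = 0 → x = y)

def ballTopology {X : Type*} (d : X → X → ℝ) : TopologicalSpace X :=
  TopologicalSpace.generateFrom {B | ∃ x r, 0 < r ∧ B = {y | d x y < r}}

def IsEquidistantQM {X : Type*} (d : X → X → ℝ) : Prop :=
  ∃ t > 0, ∀ x y, d x y ≠ 0 → d x y = t

def IsEquidistantMetric {X : Type*} (ρ : X → X → ℝ) : Prop :=
  (∀ x y, ρ x y = 0 ↔ x = y) ∧ (∀ x y, ρ x y = ρ y x) ∧
  (∀ x y z, ρ x z ≤ ρ x y + ρ y z) ∧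
  ∃ t > 0, ∀ x y, x ≠ y → ρ x y = t

theorem stmt14 {X : Type*} (τ : TopologicalSpace X)
    (hA : IsAlexandroff τ) (hT0 : @T0Space X τ) (d : X → X → ℝ)
    (hd : ∀ x y : X, (x ∈ @closure X τ {y} → d x y = 0) ∧
      (x ∉ @closure X τ {y} → d x y = 1)) :
    IsQuasiMetric d ∧ IsEquidistantQM d ∧ ballTopology d = τ := by
  letI := τ
  have hzero : ∀ x y : X, d x y = 0 ↔ x ∈ closure ({y} : Set X) := by
    intro x y
    constructor
    · intro h0
      by_contra h
      have h1 := (hd x y).2 h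
      rw [h0] at h1
      norm_num at h1
    · exact (hd x y).1
  have hd01 : ∀ x y : X, d x y = 0 ∨ d x y = 1 := by
    intro x y
    by_cases h : x ∈ closure ({y} : Set X)
    · exact Or.inl ((hd x y).1 h)
    · exact Or.inr ((hd x y).2 h)
  have hnonneg : ∀ x y : X, 0 ≤ d x y := by
    intro x y
    rcases hd01 x y with h | h <;> rw [h] <;> norm_num
  have hle1 : ∀ x y : X, d x y ≤ 1 := by
    intro x y
    rcases hd01 x y with h | h <;> rw [h] <;> norm_num
  have hrefl : ∀ x : X, d x x = 0 :=
    fun x => (hzero x x).2 (subset_closure rfl)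
  -- closure transitivity
  have htrans : ∀ x y z : X, x ∈ closure ({z} : Set X) →
      z ∈ closure ({y} : Set X) → x ∈ closure ({y} : Set X) := by
    intro x y z hxz hzy
    have : closure ({z} : Set X) ⊆ closure ({y} : Set X) :=
      closure_minimal (Set.singleton_subset_iff.2 hzy) isClosed_closure
    exact this hxz
  have htri : ∀ x y z : X, d x y ≤ d x z + d z y := by
    intro x y z
    rcases hd01 x y with h | h
    · rw [h]; exact add_nonneg (hnonneg x z) (hnonneg z y)
    · rw [h]
      by_contra hlt
      push_neg at hlt
      have hxz : d x z = 0 := by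
        rcases hd01 x z with h1 | h1
        · exact h1
        · exfalso; nlinarith [hnonneg z y]
      have hzy : d z y = 0 := by
        rcases hd01 z y with h1 | h1
        · exact h1
        · exfalso; nlinarith [hnonneg x z]
      have : d x y = 0 :=
        (hzero x y).2 (htrans x y z ((hzero x z).1 hxz) ((hzero z y).1 hzy))
      rw [this] at h; norm_num at h
  have hsep : ∀ x y : X, d x y = 0 → d y x = 0 → x = y := by
    intro x y hxy hyx
    have h1 := (hzero x y).1 hxy
    have h2 := (hzero y x).1 hyx
    exact (inseparable_iff_mem_closure.2 ⟨h1, h2⟩).eq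
  -- minimal open neighborhoods
  have hclU : ∀ x y : X, x ∈ closure ({y} : Set X) ↔
      ∀ U : Set X, IsOpen U → x ∈ U → y ∈ U := by
    intro x y
    rw [mem_closure_iff]
    constructor
    · intro h U hU hxU
      rcases h U hU hxU with ⟨z, hz1, hz2⟩
      rw [Set.mem_singleton_iff] at hz2
      rwa [← hz2]
    · intro h o ho hxo
      exact ⟨y, h o ho hxo, rfl⟩
  set N : X → Set X := fun x => ⋂₀ {U : Set X | IsOpen U ∧ x ∈ U} with hN
  have hNopen : ∀ x, IsOpen (N x) :=
    fun x => hA _ (fun s hs => hs.1)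
  have hxN : ∀ x, x ∈ N x := fun x => fun U hU => hU.2
  have hball : ∀ x : X, {y | d x y < 1} = N x := by
    intro x
    ext y
    simp only [Set.mem_setOf_eq, hN, Set.mem_sInter, Set.mem_setOf_eq]
    constructor
    · intro hlt U hU
      have h0 : d x y = 0 := by
        rcases hd01 x y with h | h
        · exact h
        · rw [h] at hlt; norm_num at hlt
      exact (hclU x y).1 ((hzero x y).1 h0) U hU.1 hU.2
    · intro hU
      have : x ∈ closure ({y} : Set X) :=
        (hclU x y).2 (fun U hUo hxU => hU U ⟨hUo, hxU⟩)
      rw [(hzero x y).2 this]; norm_num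
  refine ⟨⟨hnonneg, hrefl, htri, hsep⟩, ⟨1, by norm_num, ?_⟩, ?_⟩
  · intro x y hne
    rcases hd01 x y with h | h
    · exact absurd h hne
    · exact h
  · apply le_antisymm
    · -- ballTopology d ≤ τ : every τ-open is ball-open
      intro U hU
      have hU' : IsOpen[τ] U := hU
      have hUeq : U = ⋃ x ∈ U, {y | d x y < 1} := by
        ext z
        constructor
        · intro hz
          exact Set.mem_biUnion hz (by rw [hball]; exact hxN z)
        · intro hz
          rcases Set.mem_iUnion₂.1 hz with ⟨x, hxU, hxz⟩
          rw [hball] at hxz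
          exact hxz U ⟨hU', hxU⟩
      rw [hUeq]
      apply @isOpen_biUnion X X (ballTopology d)
      intro x _
      exact TopologicalSpace.isOpen_generateFrom_of_mem ⟨x, 1, by norm_num, rfl⟩
    · -- τ ≤ ballTopology d : all balls are τ-open
      apply le_generateFrom
      rintro s ⟨x, r, hr, rfl⟩
      by_cases h1 : 1 < r
      · have : {y | d x y < r} = Set.univ := by
          ext y
          simp only [Set.mem_setOf_eq, Set.mem_univ, iff_true]
          exact lt_of_le_of_lt (hle1 x y) h1
        rw [this]; exact isOpen_univ
      · push_neg at h1
        have : {y | d x y < r} = N x := by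
          rw [← hball x]
          ext y
          simp only [Set.mem_setOf_eq]
          constructor
          · intro h; exact lt_of_lt_of_le h h1
          · intro h
            rcases hd01 x y with h0 | h0
            · rw [h0]; exact hr
            · rw [h0] at h; norm_num at h
        rw [this]; exact hNopen x
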